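/- In the instance of the previous context, for any subset J of agents of size t ≤ k/2 containing agents 1 and k under the allocation A_1 = {l_1}, A_j = {l_j, d_j} for 2 ≤ j ≤ k−1, A_k = all small goods, the restricted maximin share satisfies μ_1^t(∪_{j∈J} A_j) ≤ 3k − 8 < 3k − 7 = v_1(A_1), via the averaging bound ((3k−7)(t−1) + 3(t−2) + (k−1))/t ≤ 3k − 8 for 2 ≤ t ≤ k/2. -/

import Mathlib

open Finset

/-- `k`-maximin share of additive valuation `v` restricted to `S`. -/
noncomputable def mu {α : Type*} [Fintype α] [DecidableEq α]
    (v : α → ℝ) (k : ℕ) (S : Finset α) : ℝ :=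
  ⨆ P : α → Fin k, ⨅ j : Fin k, ∑ g ∈ S.filter (fun g => P g = j), v g

/-- For a subgroup of size `t ≤ k/2` whose bundles together contain `t−1`
large goods (value `3k−7`), `t−2` medium goods (value `3`), and all `k−1`
small goods (value `1`), the restricted maximin share of agent 1 satisfies
`μ_1^t(S) ≤ 3k−8 < 3k−7 = v_1(A_1)`, via the averaging bound. -/
theorem subgroup_mu_bound (k t : ℕ) (hk : 4 ≤ k) (ht2 : 2 ≤ t) (htk : 2 * t ≤ k)
    (v : Fin (k - 1) ⊕ (Fin (k - 2) ⊕ Fin (k - 1)) → ℝ)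
    (hvL : ∀ x : Fin (k - 1), v (Sum.inl x) = 3 * (k : ℝ) - 7)
    (hvM : ∀ x : Fin (k - 2), v (Sum.inr (Sum.inl x)) = 3)
    (hvS : ∀ x : Fin (k - 1), v (Sum.inr (Sum.inr x)) = 1)
    (L : Finset (Fin (k - 1))) (hL : L.card = t - 1)
    (D : Finset (Fin (k - 2))) (hD : D.card = t - 2)
    (S : Finset (Fin (k - 1) ⊕ (Fin (k - 2) ⊕ Fin (k - 1))))
    (hS : S = L.image Sum.inl ∪ D.image (fun x => Sum.inr (Sum.inl x)) ∪
      Finset.univ.image (fun x : Fin (k - 1) => Sum.inr (Sum.inr x))) :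
    ((3 * (k : ℝ) - 7) * ((t : ℝ) - 1) + 3 * ((t : ℝ) - 2) + ((k : ℝ) - 1)) / t ≤
        3 * (k : ℝ) - 8 ∧
    mu v t S ≤ 3 * (k : ℝ) - 8 ∧
    3 * (k : ℝ) - 8 < 3 * (k : ℝ) - 7 ∧
    (∀ x : Fin (k - 1), ∑ g ∈ ({Sum.inl x} : Finset _), v g = 3 * (k : ℝ) - 7) := by
  have htpos : (0 : ℝ) < t := by positivity
  have hkr : (4 : ℝ) ≤ k := by exact_mod_cast hk
  have htr : (2 : ℝ) ≤ t := by exact_mod_cast ht2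
  have htkr : 2 * (t : ℝ) ≤ k := by exact_mod_cast htk
  -- averaging bound
  have havg : ((3 * (k : ℝ) - 7) * ((t : ℝ) - 1) + 3 * ((t : ℝ) - 2) + ((k : ℝ) - 1)) / t ≤
      3 * (k : ℝ) - 8 := by
    rw [div_le_iff₀ htpos]; nlinarith
  -- total sum
  have hLc : ((t : ℝ) - 1) = ((t - 1 : ℕ) : ℝ) := by
    have : (1:ℕ) ≤ t := by omega
    push_cast [this]; ring
  have hDc : ((t : ℝ) - 2) = ((t - 2 : ℕ) : ℝ) := by
    push_cast [ht2]; ring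
  have hKc : ((k : ℝ) - 1) = ((k - 1 : ℕ) : ℝ) := by
    have : (1:ℕ) ≤ k := by omega
    push_cast [this]; ring
  have htotal : ∑ g ∈ S, v g =
      (3 * (k : ℝ) - 7) * ((t : ℝ) - 1) + 3 * ((t : ℝ) - 2) + ((k : ℝ) - 1) := by
    have hd1 : Disjoint (L.image Sum.inl)
        (D.image (fun x => Sum.inr (Sum.inl x)) : Finset (Fin (k - 1) ⊕ (Fin (k - 2) ⊕ Fin (k - 1)))) := by
      simp [Finset.disjoint_left]
    have hd2 : Disjoint (L.image Sum.inl ∪ D.image (fun x => Sum.inr (Sum.inl x)))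
        (Finset.univ.image (fun x : Fin (k - 1) => Sum.inr (Sum.inr x))) := by
      simp [Finset.disjoint_left]
    rw [hS, Finset.sum_union hd2, Finset.sum_union hd1,
      Finset.sum_image (by simp), Finset.sum_image (by simp),
      Finset.sum_image (by intro a _ b _ h; simpa using h)]
    simp only [hvL, hvM, hvS, Finset.sum_const, nsmul_eq_mul, mul_one]
    rw [hL, hD, Finset.card_univ, Fintype.card_fin]
    rw [hLc, hDc, hKc]; ring
  refine ⟨havg, ?_, by linarith, fun x => by simp [hvL]⟩
  -- mu bound
  have : Nonempty (Fin t) := ⟨⟨0, by omega⟩⟩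
  have hmu : mu v t S ≤ (∑ g ∈ S, v g) / t := by
    apply ciSup_le
    intro P
    have hsum : ∑ j : Fin t, ∑ g ∈ S.filter (fun g => P g = j), v g = ∑ g ∈ S, v g :=
      Finset.sum_fiberwise S P v
    obtain ⟨j, _, hj⟩ := Finset.exists_le_of_sum_le (s := Finset.univ)
      (f := fun j : Fin t => ∑ g ∈ S.filter (fun g => P g = j), v g)
      (g := fun j : Fin t => (∑ g ∈ S, v g) / t)
      Finset.univ_nonempty (by
        rw [hsum, Finset.sum_const, Finset.card_univ, Fintype.card_fin, nsmul_eq_mul,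
          mul_div_cancel₀ _ (ne_of_gt htpos)])
    calc (⨅ j : Fin t, ∑ g ∈ S.filter (fun g => P g = j), v g)
        ≤ ∑ g ∈ S.filter (fun g => P g = j), v g := ciInf_le (Finite.bddBelow_range _) j
      _ ≤ (∑ g ∈ S, v g) / t := hj
  calc mu v t S ≤ (∑ g ∈ S, v g) / t := hmu
    _ ≤ 3 * (k : ℝ) - 8 := by rw [htotal]; exact havg
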